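/- Let A₁, A₂ be self-adjoint operators on a Hilbert space H such that ⟨A₂⟩^s ⟨A₁⟩^{-s} is a bounded operator for some s > 1/2. Then B(A₁) ⊆ B(A₂) and there is a constant C > 0 with ‖u‖_{B(A₂)} ≤ C ‖u‖_{B(A₁)} for all u ∈ B(A₁). -/

import Mathlib

open scoped InnerProductSpace ENNReal

noncomputable section

/-- The dyadic radii: `R_0 = 0`, `R_j = 2^(j-1)` for `j ≥ 1`
(here indexed so that `dyadicR (k+1) = 2^k`). -/
def dyadicR : ℕ → ℝ
  | 0 => 0
  | k + 1 => 2 ^ k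

/-- An abstract projection-valued (spectral) measure on `ℝ`, modelling the spectral
resolution of a self-adjoint operator `A` on a complex Hilbert space `H`:
`P S` is the spectral projection of `A` onto the Borel set `S`. -/
structure SpectralMeasure (H : Type*) [NormedAddCommGroup H] [InnerProductSpace ℂ H]
    [CompleteSpace H] where
  P : Set ℝ → H →L[ℂ] H
  inter : ∀ S T : Set ℝ, (P S).comp (P T) = P (S ∩ T)
  symm : ∀ (S : Set ℝ) (u v : H), ⟪P S u, v⟫_ℂ = ⟪u, P S v⟫_ℂ
  empty : P ∅ = 0
  univ : P Set.univ = ContinuousLinearMap.id ℂ H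
  hasSum_iUnion : ∀ S : ℕ → Set ℝ, Pairwise (Function.onFun Disjoint S) →
    ∀ u : H, HasSum (fun n => P (S n) u) (P (⋃ n, S n) u)

variable {H : Type*} [NormedAddCommGroup H] [InnerProductSpace ℂ H] [CompleteSpace H]

/-- The spectral projection `F_j(A)` onto `{R_{j-1} ≤ |A| < R_j}` (0-indexed: `band k`
corresponds to `F_{k+1}`). -/
def SpectralMeasure.band (A : SpectralMeasure H) (k : ℕ) : H →L[ℂ] H :=
  A.P {t : ℝ | dyadicR k ≤ |t| ∧ |t| < dyadicR (k + 1)}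

/-- The Besov norm `‖u‖_B = Σ_j R_j^{1/2} ‖F_j(A) u‖`, valued in `ℝ≥0∞`;
`u ∈ B(A)` precisely when this is finite. -/
def SpectralMeasure.besov (A : SpectralMeasure H) (u : H) : ℝ≥0∞ :=
  ∑' k : ℕ, ENNReal.ofReal (Real.sqrt (dyadicR (k + 1)) * ‖A.band k u‖)

/-- The spectrally-localized weighted square norm `Σ_j ⟨R_j⟩^{2s} ‖F_j(A) u‖²`,
an equivalent expression (uniformly over the dyadic blocks) for `‖⟨A⟩^s u‖²`. -/
def SpectralMeasure.weightedSq (A : SpectralMeasure H) (s : ℝ) (u : H) : ℝ≥0∞ :=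
  ∑' k : ℕ, ENNReal.ofReal ((dyadicR (k + 1) ^ 2 + 1) ^ s * ‖A.band k u‖ ^ 2)

/-! ### Auxiliary lemmas -/

lemma dyadicR_succ' (k : ℕ) : dyadicR (k + 1) = 2 ^ k := rfl

lemma dyadicR_mono : Monotone dyadicR := by
  apply monotone_nat_of_le_succ
  intro n
  cases n with
  | zero => simp [dyadicR]
  | succ k =>
    show (2:ℝ)^k ≤ 2 ^ (k+1)
    exact pow_le_pow_right₀ one_le_two (Nat.le_succ k)

lemma dyadicR_sq (k : ℕ) : dyadicR (k + 1) ^ 2 = (4:ℝ) ^ k := by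
  rw [dyadicR_succ', ← pow_mul, mul_comm, pow_mul]
  norm_num

/-- The `k`-th dyadic band in `ℝ`. -/
def bandSet (k : ℕ) : Set ℝ := {t : ℝ | dyadicR k ≤ |t| ∧ |t| < dyadicR (k + 1)}

lemma bandSet_disjoint : Pairwise (Function.onFun Disjoint bandSet) := by
  have key : ∀ k j : ℕ, k < j → Disjoint (bandSet k) (bandSet j) := by
    intro k j hkj
    rw [Set.disjoint_left]
    rintro t ⟨_, h2⟩ ⟨h3, _⟩
    have : dyadicR (k+1) ≤ dyadicR j := dyadicR_mono hkj
    linarith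
  intro k j hkj
  rcases lt_or_gt_of_ne hkj with h | h
  · exact key k j h
  · exact (key j k h).symm

lemma bandSet_iUnion : (⋃ k, bandSet k) = Set.univ := by
  ext t
  simp only [Set.mem_iUnion, Set.mem_univ, iff_true]
  have hex : ∃ n : ℕ, |t| < dyadicR (n + 1) := by
    obtain ⟨n, hn⟩ := pow_unbounded_of_one_lt |t| (one_lt_two (α := ℝ))
    exact ⟨n, by rwa [dyadicR_succ']⟩
  refine ⟨Nat.find hex, ?_, Nat.find_spec hex⟩
  rcases Nat.eq_zero_or_eq_succ_pred (Nat.find hex) with h | h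
  · rw [h]; simp [dyadicR]
  · rw [h]
    have := Nat.find_min hex (m := Nat.find hex - 1) (by omega)
    push_neg at this
    simpa [Nat.succ_eq_add_one] using this

lemma SpectralMeasure.P_idem (A : SpectralMeasure H) (S : Set ℝ) (u : H) :
    A.P S (A.P S u) = A.P S u := by
  have h := A.inter S S
  rw [Set.inter_self] at h
  calc A.P S (A.P S u) = ((A.P S).comp (A.P S)) u := rfl
    _ = A.P S u := by rw [h]

lemma SpectralMeasure.P_norm_le (A : SpectralMeasure H) (S : Set ℝ) (u : H) :
    ‖A.P S u‖ ≤ ‖u‖ := by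
  have h1 : ⟪A.P S u, A.P S u⟫_ℂ = ⟪u, A.P S u⟫_ℂ := by
    rw [A.symm S u (A.P S u), A.P_idem]
  have h2 : (‖A.P S u‖ : ℂ) ^ 2 = ⟪u, A.P S u⟫_ℂ := by
    rw [← h1, inner_self_eq_norm_sq_to_K]; norm_cast
  have h3 : ‖A.P S u‖ ^ 2 ≤ ‖u‖ * ‖A.P S u‖ := by
    calc ‖A.P S u‖ ^ 2 = ‖(‖A.P S u‖ : ℂ) ^ 2‖ := by
          rw [norm_pow, Complex.norm_real, Real.norm_eq_abs, abs_of_nonneg (norm_nonneg _)]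
      _ = ‖⟪u, A.P S u⟫_ℂ‖ := by rw [h2]
      _ ≤ ‖u‖ * ‖A.P S u‖ := norm_inner_le_norm _ _
  rcases eq_or_lt_of_le (norm_nonneg (A.P S u)) with h | h
  · rw [← h]; exact norm_nonneg u
  · nlinarith

lemma SpectralMeasure.band_eq (A : SpectralMeasure H) (k : ℕ) :
    A.band k = A.P (bandSet k) := rfl

lemma SpectralMeasure.band_ortho (A : SpectralMeasure H) {k j : ℕ} (h : k ≠ j) (u : H) :
    A.band k (A.band j u) = 0 := by
  have hdisj : bandSet k ∩ bandSet j = ∅ :=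
    Set.disjoint_iff_inter_eq_empty.mp (bandSet_disjoint h)
  calc A.band k (A.band j u) = ((A.P (bandSet k)).comp (A.P (bandSet j))) u := rfl
    _ = A.P (bandSet k ∩ bandSet j) u := by rw [A.inter]
    _ = A.P ∅ u := by rw [hdisj]
    _ = 0 := by rw [A.empty]; rfl

lemma SpectralMeasure.band_idem (A : SpectralMeasure H) (j : ℕ) (u : H) :
    A.band j (A.band j u) = A.band j u := A.P_idem _ u

lemma SpectralMeasure.hasSum_band (A : SpectralMeasure H) (u : H) :
    HasSum (fun j => A.band j u) u := by
  have h := A.hasSum_iUnion bandSet bandSet_disjoint u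
  rw [bandSet_iUnion, A.univ] at h
  simpa [SpectralMeasure.band_eq] using h

lemma SpectralMeasure.weightedSq_eq (A : SpectralMeasure H) (s : ℝ) (u : H) :
    A.weightedSq s u = ∑' k : ℕ, ENNReal.ofReal (((4:ℝ) ^ k + 1) ^ s * ‖A.band k u‖ ^ 2) := by
  unfold SpectralMeasure.weightedSq
  apply tsum_congr
  intro k
  rw [dyadicR_sq]

lemma SpectralMeasure.weightedSq_band (A : SpectralMeasure H) (s : ℝ) (j : ℕ) (u : H) :
    A.weightedSq s (A.band j u)
      = ENNReal.ofReal (((4:ℝ) ^ j + 1) ^ s * ‖A.band j u‖ ^ 2) := by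
  rw [A.weightedSq_eq]
  rw [tsum_eq_single j]
  · rw [A.band_idem]
  · intro k hk
    rw [A.band_ortho hk]
    simp

lemma SpectralMeasure.besov_eq (A : SpectralMeasure H) (u : H) :
    A.besov u = ∑' k : ℕ, ENNReal.ofReal (Real.sqrt ((2:ℝ) ^ k) * ‖A.band k u‖) := rfl

lemma ofReal_norm_hasSum_le {f : ℕ → H} {a : H} (h : HasSum f a) :
    ENNReal.ofReal ‖a‖ ≤ ∑' i, ENNReal.ofReal ‖f i‖ := by
  by_cases hs : Summable fun i => ‖f i‖
  · rw [← ENNReal.ofReal_tsum_of_nonneg (fun _ => norm_nonneg _) hs]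
    apply ENNReal.ofReal_le_ofReal
    rw [← h.tsum_eq]
    exact norm_tsum_le_tsum_norm hs
  · have htop : (∑' i, ENNReal.ofReal ‖f i‖) = ⊤ := by
      simp only [ofReal_norm, enorm_eq_nnnorm]
      by_contra hne
      have := ENNReal.tsum_coe_ne_top_iff_summable.mp hne
      exact hs (by simpa using NNReal.summable_coe.mpr this)
    rw [htop]; exact le_top

lemma sqrt_pow' {x : ℝ} (hx : 0 ≤ x) (m : ℕ) : Real.sqrt (x ^ m) = Real.sqrt x ^ m := by
  induction m with
  | zero => simp
  | succ n ih => rw [pow_succ, Real.sqrt_mul (pow_nonneg hx n), ih, pow_succ]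

lemma pow_rpow_comm {x : ℝ} (hx : 0 ≤ x) (m : ℕ) (s : ℝ) : (x ^ m) ^ s = (x ^ s) ^ m := by
  rw [← Real.rpow_natCast x m, ← Real.rpow_mul hx, mul_comm, Real.rpow_mul hx,
    Real.rpow_natCast]

lemma geom_tail_bound {τ : ℝ} (hτ0 : 0 < τ) (hτ1 : τ < 1) (j : ℕ) (G : Finset ℕ)
    (hG : ∀ k ∈ G, j < k) : ∑ k ∈ G, τ ^ (k - j) ≤ (1 - τ)⁻¹ := by
  have hτ1' : 0 < 1 - τ := by linarith
  have hsummable : Summable (fun k => if j < k then τ ^ (k - j) else 0) := by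
    have h1 : ∀ k : ℕ, 0 ≤ if j < k then τ ^ (k - j) else 0 := fun k => by positivity
    have h2 : ∀ k : ℕ, (if j < k then τ ^ (k - j) else 0) ≤ (τ ^ j)⁻¹ * τ ^ k := by
      intro k
      by_cases hk : j < k
      · rw [if_pos hk, pow_sub₀ τ (ne_of_gt hτ0) hk.le]
        exact le_of_eq (mul_comm _ _)
      · rw [if_neg hk]; positivity
    have h3 : Summable (fun k : ℕ => (τ ^ j)⁻¹ * τ ^ k) :=
      (summable_geometric_of_lt_one hτ0.le hτ1).mul_left _
    exact Summable.of_nonneg_of_le h1 h2 h3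
  calc ∑ k ∈ G, τ ^ (k - j) = ∑ k ∈ G, if j < k then τ ^ (k - j) else 0 := by
        apply Finset.sum_congr rfl
        intro k hk
        rw [if_pos (hG k hk)]
    _ ≤ ∑' k, if j < k then τ ^ (k - j) else 0 :=
        Summable.sum_le_tsum _ (fun k _ => by positivity) hsummable
    _ = ∑ k ∈ Finset.range (j+1), (if j < k then τ ^ (k - j) else 0)
        + ∑' k, if j < k + (j+1) then τ ^ (k + (j+1) - j) else 0 :=
        (Summable.sum_add_tsum_nat_add (j+1) hsummable).symm
    _ = ∑' (k : ℕ), τ ^ (k + 1) := by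
        rw [Finset.sum_eq_zero, zero_add]
        · apply tsum_congr
          intro m
          rw [if_pos (by omega)]
          congr 1
          omega
        · intro k hk
          simp only [Finset.mem_range] at hk
          rw [if_neg (by omega)]
    _ = (1 - τ)⁻¹ * τ := by
        simp_rw [pow_succ]
        rw [tsum_mul_right, tsum_geometric_of_lt_one hτ0.le hτ1]
    _ ≤ (1 - τ)⁻¹ := by nlinarith [inv_nonneg.mpr hτ1'.le]

lemma schur_bound {s N' : ℝ} (hs : 1 / 2 < s) (hN : 1 ≤ N') :
    ∃ C > (0 : ℝ), ∀ (j : ℕ) (F : Finset ℕ),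
      ∑ k ∈ F, Real.sqrt ((2:ℝ) ^ k) *
          min 1 (Real.sqrt (N' * ((4:ℝ) ^ j + 1) ^ s / ((4:ℝ) ^ k + 1) ^ s))
        ≤ C * Real.sqrt ((2:ℝ) ^ j) := by
  obtain ⟨σ, hσdef⟩ : ∃ σ : ℝ, σ = Real.sqrt 2 := ⟨_, rfl⟩
  have hσ1 : 1 < σ := by
    rw [hσdef, show (1:ℝ) = Real.sqrt 1 by simp]
    exact Real.sqrt_lt_sqrt (by norm_num) (by norm_num)
  have hσ0 : 0 < σ := lt_trans one_pos hσ1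
  have hσ1' : 0 < σ - 1 := by linarith
  obtain ⟨r, hrdef⟩ : ∃ r : ℝ, r = Real.sqrt ((1/4 : ℝ) ^ s) := ⟨_, rfl⟩
  have hr0 : 0 < r := hrdef ▸ Real.sqrt_pos.mpr (Real.rpow_pos_of_pos (by norm_num) s)
  obtain ⟨τ, hτdef⟩ : ∃ τ : ℝ, τ = σ * r := ⟨_, rfl⟩
  have hτ0 : 0 < τ := hτdef ▸ mul_pos hσ0 hr0
  have hτ1 : τ < 1 := by
    have h14 : ((1/4 : ℝ)) ^ s < (1/4 : ℝ) ^ (1/2 : ℝ) :=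
      Real.rpow_lt_rpow_of_exponent_gt (by norm_num) (by norm_num) hs
    have h12 : ((1/4 : ℝ)) ^ (1/2 : ℝ) = 1/2 := by
      rw [← Real.sqrt_eq_rpow, show (1/4:ℝ) = (1/2)^2 by norm_num,
        Real.sqrt_sq (by norm_num)]
    have hτeq : τ = Real.sqrt (2 * (1/4 : ℝ) ^ s) := by
      rw [hτdef, hσdef, hrdef, Real.sqrt_mul (by norm_num : (0:ℝ) ≤ 2)]
    calc τ = Real.sqrt (2 * (1/4 : ℝ) ^ s) := hτeq
      _ < Real.sqrt 1 := Real.sqrt_lt_sqrt (by positivity) (by nlinarith)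
      _ = 1 := Real.sqrt_one
  have hτ1' : 0 < 1 - τ := by linarith
  obtain ⟨E, hEdef⟩ : ∃ E : ℝ, E = Real.sqrt (N' * (2:ℝ) ^ s) := ⟨_, rfl⟩
  have hE0 : 0 < E := hEdef ▸ Real.sqrt_pos.mpr (by positivity)
  refine ⟨σ / (σ - 1) + E * (1 - τ)⁻¹,
    add_pos (div_pos hσ0 hσ1') (mul_pos hE0 (inv_pos.mpr hτ1')), ?_⟩
  intro j F
  have hρ : ∀ k : ℕ, Real.sqrt ((2:ℝ) ^ k) = σ ^ k := fun k => by
    rw [hσdef]; exact sqrt_pow' (by norm_num) k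
  rw [← Finset.sum_filter_add_sum_filter_not F (· ≤ j)]
  have partA : ∑ k ∈ F.filter (· ≤ j),
      Real.sqrt ((2:ℝ) ^ k) * min 1 (Real.sqrt (N' * ((4:ℝ) ^ j + 1) ^ s / ((4:ℝ) ^ k + 1) ^ s))
      ≤ σ / (σ - 1) * σ ^ j := by
    have h1 : ∀ k ∈ F.filter (· ≤ j),
        Real.sqrt ((2:ℝ) ^ k) * min 1 (Real.sqrt (N' * ((4:ℝ) ^ j + 1) ^ s / ((4:ℝ) ^ k + 1) ^ s))
        ≤ σ ^ k := by
      intro k _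
      rw [hρ]
      calc σ ^ k * min 1 (Real.sqrt (N' * ((4:ℝ) ^ j + 1) ^ s / ((4:ℝ) ^ k + 1) ^ s))
          ≤ σ ^ k * 1 := mul_le_mul_of_nonneg_left (min_le_left _ _) (by positivity)
        _ = σ ^ k := mul_one _
    calc ∑ k ∈ F.filter (· ≤ j),
        Real.sqrt ((2:ℝ) ^ k) * min 1 (Real.sqrt (N' * ((4:ℝ) ^ j + 1) ^ s / ((4:ℝ) ^ k + 1) ^ s))
        ≤ ∑ k ∈ F.filter (· ≤ j), σ ^ k := Finset.sum_le_sum h1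
      _ ≤ ∑ k ∈ Finset.range (j + 1), σ ^ k := by
          apply Finset.sum_le_sum_of_subset_of_nonneg
          · intro k hk
            simp only [Finset.mem_filter] at hk
            exact Finset.mem_range.mpr (by omega)
          · intro k _ _; positivity
      _ = (σ ^ (j + 1) - 1) / (σ - 1) := geom_sum_eq (ne_of_gt hσ1) (j + 1)
      _ ≤ σ ^ (j + 1) / (σ - 1) := by gcongr; linarith
      _ = σ / (σ - 1) * σ ^ j := by rw [pow_succ]; ring
  have partB : ∑ k ∈ F.filter (¬ · ≤ j),
      Real.sqrt ((2:ℝ) ^ k) * min 1 (Real.sqrt (N' * ((4:ℝ) ^ j + 1) ^ s / ((4:ℝ) ^ k + 1) ^ s))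
      ≤ E * (1 - τ)⁻¹ * σ ^ j := by
    have hpt : ∀ k ∈ F.filter (¬ · ≤ j),
        Real.sqrt ((2:ℝ) ^ k) * min 1 (Real.sqrt (N' * ((4:ℝ) ^ j + 1) ^ s / ((4:ℝ) ^ k + 1) ^ s))
        ≤ E * σ ^ j * τ ^ (k - j) := by
      intro k hk
      simp only [Finset.mem_filter, not_le] at hk
      obtain ⟨m, rfl⟩ : ∃ m, k = j + m + 1 := ⟨k - j - 1, by omega⟩
      have hsub : j + m + 1 - j = m + 1 := by omega
      rw [hsub]
      have hbase : N' * ((4:ℝ) ^ j + 1) ^ s / ((4:ℝ) ^ (j + m + 1) + 1) ^ s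
          ≤ N' * (2:ℝ) ^ s * ((1/4 : ℝ) ^ s) ^ (m + 1) := by
        have hq : ((4:ℝ) ^ j + 1) ^ s / ((4:ℝ) ^ (j + m + 1) + 1) ^ s
            ≤ (2:ℝ) ^ s * ((1/4 : ℝ) ^ s) ^ (m + 1) := by
          rw [← Real.div_rpow (by positivity) (by positivity),
            ← pow_rpow_comm (by norm_num) (m+1) s,
            ← Real.mul_rpow (by norm_num) (by positivity)]
          apply Real.rpow_le_rpow (by positivity) _ (by linarith)
          rw [div_le_iff₀ (by positivity)]
          have e1 : ((4:ℝ)) ^ (j + m + 1) = 4 ^ j * 4 ^ (m + 1) := by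
            rw [show j + m + 1 = j + (m + 1) by omega, pow_add]
          have e2 : ((1/4:ℝ)) ^ (m + 1) = ((4:ℝ) ^ (m+1))⁻¹ := by
            rw [one_div, inv_pow]
          rw [e1, e2]
          have h4 : (0:ℝ) < 4 ^ (m+1) := by positivity
          have h4j : (1:ℝ) ≤ 4 ^ j := one_le_pow₀ (by norm_num)
          have hinv0 : (0:ℝ) ≤ ((4:ℝ) ^ (m+1))⁻¹ := by positivity
          rw [show (2:ℝ) * ((4 ^ (m+1):ℝ))⁻¹ * (4 ^ j * 4 ^ (m+1) + 1)
              = 2 * 4 ^ j + 2 * ((4 ^ (m+1):ℝ))⁻¹ by field_simp]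
          linarith
        calc N' * ((4:ℝ) ^ j + 1) ^ s / ((4:ℝ) ^ (j + m + 1) + 1) ^ s
            = N' * (((4:ℝ) ^ j + 1) ^ s / ((4:ℝ) ^ (j + m + 1) + 1) ^ s) := by ring
          _ ≤ N' * ((2:ℝ) ^ s * ((1/4 : ℝ) ^ s) ^ (m + 1)) :=
              mul_le_mul_of_nonneg_left hq (by linarith)
          _ = N' * (2:ℝ) ^ s * ((1/4 : ℝ) ^ s) ^ (m + 1) := by ring
      have hβ : Real.sqrt (N' * ((4:ℝ) ^ j + 1) ^ s / ((4:ℝ) ^ (j + m + 1) + 1) ^ s)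
          ≤ E * r ^ (m + 1) := by
        rw [hEdef, hrdef]
        calc Real.sqrt (N' * ((4:ℝ) ^ j + 1) ^ s / ((4:ℝ) ^ (j + m + 1) + 1) ^ s)
            ≤ Real.sqrt (N' * (2:ℝ) ^ s * ((1/4 : ℝ) ^ s) ^ (m + 1)) := Real.sqrt_le_sqrt hbase
          _ = Real.sqrt (N' * (2:ℝ) ^ s) * Real.sqrt ((1/4 : ℝ) ^ s) ^ (m + 1) := by
              rw [Real.sqrt_mul (by positivity), sqrt_pow' (by positivity)]
      have hmin : min 1 (Real.sqrt (N' * ((4:ℝ) ^ j + 1) ^ s / ((4:ℝ) ^ (j + m + 1) + 1) ^ s))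
          ≤ E * r ^ (m + 1) := le_trans (min_le_right _ _) hβ
      rw [hρ]
      have step : σ ^ (j + m + 1) *
          min 1 (Real.sqrt (N' * ((4:ℝ) ^ j + 1) ^ s / ((4:ℝ) ^ (j + m + 1) + 1) ^ s))
          ≤ σ ^ (j + m + 1) * (E * r ^ (m + 1)) :=
        mul_le_mul_of_nonneg_left hmin (by positivity)
      have heq : σ ^ (j + m + 1) * (E * r ^ (m + 1)) = E * σ ^ j * τ ^ (m + 1) := by
        rw [hτdef, mul_pow, show j + m + 1 = j + (m + 1) by ring, pow_add]
        ring
      linarith [step, le_of_eq heq]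
    have htail : ∑ k ∈ F.filter (¬ · ≤ j), τ ^ (k - j) ≤ (1 - τ)⁻¹ := by
      apply geom_tail_bound hτ0 hτ1
      intro k hk
      simp only [Finset.mem_filter, not_le] at hk
      exact hk.2
    calc ∑ k ∈ F.filter (¬ · ≤ j),
        Real.sqrt ((2:ℝ) ^ k) * min 1 (Real.sqrt (N' * ((4:ℝ) ^ j + 1) ^ s / ((4:ℝ) ^ k + 1) ^ s))
        ≤ ∑ k ∈ F.filter (¬ · ≤ j), E * σ ^ j * τ ^ (k - j) := Finset.sum_le_sum hpt
      _ = E * σ ^ j * ∑ k ∈ F.filter (¬ · ≤ j), τ ^ (k - j) := by rw [Finset.mul_sum]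
      _ ≤ E * σ ^ j * (1 - τ)⁻¹ := mul_le_mul_of_nonneg_left htail (by positivity)
      _ = E * (1 - τ)⁻¹ * σ ^ j := by ring
  rw [hρ j]
  calc ∑ k ∈ F.filter (· ≤ j), Real.sqrt ((2:ℝ) ^ k) *
          min 1 (Real.sqrt (N' * ((4:ℝ) ^ j + 1) ^ s / ((4:ℝ) ^ k + 1) ^ s)) +
        ∑ k ∈ F.filter (¬ · ≤ j), Real.sqrt ((2:ℝ) ^ k) *
          min 1 (Real.sqrt (N' * ((4:ℝ) ^ j + 1) ^ s / ((4:ℝ) ^ k + 1) ^ s))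
      ≤ σ / (σ - 1) * σ ^ j + E * (1 - τ)⁻¹ * σ ^ j := add_le_add partA partB
    _ = (σ / (σ - 1) + E * (1 - τ)⁻¹) * σ ^ j := by ring

theorem stmt9 (A₁ A₂ : SpectralMeasure H) (s : ℝ) (hs : 1 / 2 < s) (N : ℝ)
    (hrel : ∀ u : H, A₂.weightedSq s u ≤ ENNReal.ofReal N * A₁.weightedSq s u) :
    ∃ C > (0 : ℝ), ∀ u : H,
      (A₁.besov u ≠ ⊤ → A₂.besov u ≠ ⊤) ∧
      A₂.besov u ≤ ENNReal.ofReal C * A₁.besov u := by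
  obtain ⟨N', hN'def⟩ : ∃ N' : ℝ, N' = max N 1 := ⟨_, rfl⟩
  have hN1 : 1 ≤ N' := hN'def ▸ le_max_right _ _
  have hN0 : (0:ℝ) ≤ N' := by linarith
  have hrel' : ∀ u : H, A₂.weightedSq s u ≤ ENNReal.ofReal N' * A₁.weightedSq s u := fun u =>
    le_trans (hrel u)
      (mul_le_mul_left (ENNReal.ofReal_le_ofReal (hN'def ▸ le_max_left N 1)) _)
  obtain ⟨C, hC0, hschur⟩ := schur_bound hs hN1
  refine ⟨C, hC0, fun u => ?_⟩
  -- the key pointwise estimate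
  have hkey : ∀ k j : ℕ, ‖A₂.band k (A₁.band j u)‖
      ≤ min 1 (Real.sqrt (N' * ((4:ℝ) ^ j + 1) ^ s / ((4:ℝ) ^ k + 1) ^ s)) * ‖A₁.band j u‖ := by
    intro k j
    have hb1 : ‖A₂.band k (A₁.band j u)‖ ≤ ‖A₁.band j u‖ := A₂.P_norm_le _ _
    have hwk : (0:ℝ) < ((4:ℝ) ^ k + 1) ^ s := Real.rpow_pos_of_pos (by positivity) s
    have hwj : (0:ℝ) < ((4:ℝ) ^ j + 1) ^ s := Real.rpow_pos_of_pos (by positivity) s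
    have h2 : ENNReal.ofReal (((4:ℝ) ^ k + 1) ^ s * ‖A₂.band k (A₁.band j u)‖ ^ 2)
        ≤ ENNReal.ofReal (N' * (((4:ℝ) ^ j + 1) ^ s * ‖A₁.band j u‖ ^ 2)) := by
      calc ENNReal.ofReal (((4:ℝ) ^ k + 1) ^ s * ‖A₂.band k (A₁.band j u)‖ ^ 2)
          ≤ A₂.weightedSq s (A₁.band j u) := by
            rw [A₂.weightedSq_eq]
            exact ENNReal.le_tsum k
        _ ≤ ENNReal.ofReal N' * A₁.weightedSq s (A₁.band j u) := hrel' _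
        _ = ENNReal.ofReal N'
              * ENNReal.ofReal (((4:ℝ) ^ j + 1) ^ s * ‖A₁.band j u‖ ^ 2) := by
            rw [A₁.weightedSq_band]
        _ = ENNReal.ofReal (N' * (((4:ℝ) ^ j + 1) ^ s * ‖A₁.band j u‖ ^ 2)) :=
            (ENNReal.ofReal_mul hN0).symm
    rw [ENNReal.ofReal_le_ofReal_iff (by positivity)] at h2
    have h4 : ‖A₂.band k (A₁.band j u)‖ ^ 2
        ≤ (N' * ((4:ℝ) ^ j + 1) ^ s / ((4:ℝ) ^ k + 1) ^ s) * ‖A₁.band j u‖ ^ 2 := by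
      rw [div_mul_eq_mul_div, le_div_iff₀ hwk]
      nlinarith [h2]
    have h5 : ‖A₂.band k (A₁.band j u)‖
        ≤ Real.sqrt (N' * ((4:ℝ) ^ j + 1) ^ s / ((4:ℝ) ^ k + 1) ^ s) * ‖A₁.band j u‖ := by
      have h6 := Real.sqrt_le_sqrt h4
      rwa [Real.sqrt_sq (norm_nonneg _), Real.sqrt_mul (by positivity),
        Real.sqrt_sq (norm_nonneg _)] at h6
    rcases le_total (1:ℝ) (Real.sqrt (N' * ((4:ℝ) ^ j + 1) ^ s / ((4:ℝ) ^ k + 1) ^ s)) with h | h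
    · rw [min_eq_left h, one_mul]; exact hb1
    · rw [min_eq_right h]; exact h5
  -- main chain
  have main : A₂.besov u ≤ ENNReal.ofReal C * A₁.besov u := by
    calc A₂.besov u
        = ∑' k : ℕ, ENNReal.ofReal (Real.sqrt ((2:ℝ) ^ k) * ‖A₂.band k u‖) := A₂.besov_eq u
      _ ≤ ∑' k : ℕ, ENNReal.ofReal (Real.sqrt ((2:ℝ) ^ k))
            * ∑' j : ℕ, ENNReal.ofReal ‖A₂.band k (A₁.band j u)‖ := by
          apply ENNReal.tsum_le_tsum
          intro k
          rw [ENNReal.ofReal_mul (Real.sqrt_nonneg _)]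
          exact mul_le_mul_right
            (ofReal_norm_hasSum_le ((A₂.band k).hasSum (A₁.hasSum_band u))) _
      _ = ∑' k : ℕ, ∑' j : ℕ, ENNReal.ofReal (Real.sqrt ((2:ℝ) ^ k))
            * ENNReal.ofReal ‖A₂.band k (A₁.band j u)‖ := by
          apply tsum_congr; intro k
          rw [ENNReal.tsum_mul_left]
      _ = ∑' j : ℕ, ∑' k : ℕ, ENNReal.ofReal (Real.sqrt ((2:ℝ) ^ k))
            * ENNReal.ofReal ‖A₂.band k (A₁.band j u)‖ := ENNReal.tsum_comm
      _ ≤ ∑' j : ℕ, ∑' k : ℕ,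
            ENNReal.ofReal (Real.sqrt ((2:ℝ) ^ k)
              * min 1 (Real.sqrt (N' * ((4:ℝ) ^ j + 1) ^ s / ((4:ℝ) ^ k + 1) ^ s)))
            * ENNReal.ofReal ‖A₁.band j u‖ := by
          apply ENNReal.tsum_le_tsum; intro j
          apply ENNReal.tsum_le_tsum; intro k
          calc ENNReal.ofReal (Real.sqrt ((2:ℝ) ^ k)) * ENNReal.ofReal ‖A₂.band k (A₁.band j u)‖
              ≤ ENNReal.ofReal (Real.sqrt ((2:ℝ) ^ k)) * ENNReal.ofReal
                  (min 1 (Real.sqrt (N' * ((4:ℝ) ^ j + 1) ^ s / ((4:ℝ) ^ k + 1) ^ s))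
                    * ‖A₁.band j u‖) :=
                mul_le_mul_right (ENNReal.ofReal_le_ofReal (hkey k j)) _
            _ = ENNReal.ofReal (Real.sqrt ((2:ℝ) ^ k)
                  * min 1 (Real.sqrt (N' * ((4:ℝ) ^ j + 1) ^ s / ((4:ℝ) ^ k + 1) ^ s)))
                * ENNReal.ofReal ‖A₁.band j u‖ := by
                rw [← ENNReal.ofReal_mul (Real.sqrt_nonneg _), ← mul_assoc,
                  ENNReal.ofReal_mul (by positivity)]
      _ = ∑' j : ℕ, (∑' k : ℕ,
            ENNReal.ofReal (Real.sqrt ((2:ℝ) ^ k)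
              * min 1 (Real.sqrt (N' * ((4:ℝ) ^ j + 1) ^ s / ((4:ℝ) ^ k + 1) ^ s))))
            * ENNReal.ofReal ‖A₁.band j u‖ := by
          apply tsum_congr; intro j
          rw [ENNReal.tsum_mul_right]
      _ ≤ ∑' j : ℕ, ENNReal.ofReal (C * Real.sqrt ((2:ℝ) ^ j))
            * ENNReal.ofReal ‖A₁.band j u‖ := by
          apply ENNReal.tsum_le_tsum; intro j
          apply mul_le_mul_left
          rw [ENNReal.tsum_eq_iSup_sum]
          apply iSup_le
          intro F
          rw [← ENNReal.ofReal_sum_of_nonneg (fun k _ => by positivity)]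
          exact ENNReal.ofReal_le_ofReal (hschur j F)
      _ = ENNReal.ofReal C * A₁.besov u := by
          rw [A₁.besov_eq, ← ENNReal.tsum_mul_left]
          apply tsum_congr; intro j
          rw [ENNReal.ofReal_mul hC0.le, mul_assoc,
            ← ENNReal.ofReal_mul (Real.sqrt_nonneg _)]
  refine ⟨fun h1 => ?_, main⟩
  exact ne_top_of_le_ne_top (ENNReal.mul_ne_top ENNReal.ofReal_ne_top h1) main
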